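/- Let λ_1,…,λ_r be positive reals with ∑_{i=1}^r λ_i = 1, and let Λ = diag(√λ_1,…,√λ_r) as an r×r complex matrix. Then the following are equivalent: (i) there exist r×r complex matrices A and B such that A, I−A, B, I−B are all positive semidefinite and tr(Λ A Λ B) = 1/2, tr(Λ(I−A)Λ(I−B)) = 1/2, tr(Λ A Λ(I−B)) = 0, and tr(Λ(I−A)Λ B) = 0; (ii) there exists a subset S ⊆ {1,…,r} with ∑_{i∈S} λ_i = 1/2. -/

import Mathlib

open Matrix
open scoped ComplexOrder

section AuxLemmas
variable {n : Type*} [Fintype n] [DecidableEq n]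

section SqrtPort
open scoped MatrixOrder

noncomputable def Matrix.PosSemidef.sqrt {M : Matrix n n ℂ} (_hM : M.PosSemidef) :
    Matrix n n ℂ := CFC.sqrt M

lemma Matrix.PosSemidef.sqrt_mul_self {M : Matrix n n ℂ} (hM : M.PosSemidef) :
    hM.sqrt * hM.sqrt = M := CFC.sqrt_mul_sqrt_self M hM.nonneg

lemma Matrix.PosSemidef.posSemidef_sqrt {M : Matrix n n ℂ} (hM : M.PosSemidef) :
    hM.sqrt.PosSemidef := (CFC.sqrt_nonneg M).posSemidef

end SqrtPort

/-- A PSD complex matrix with zero trace is zero. -/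
lemma psd_trace_zero {M : Matrix n n ℂ} (hM : M.PosSemidef) (h : M.trace = 0) : M = 0 := by
  have hs := hM.sqrt_mul_self
  have hherm : hM.sqrt.conjTranspose = hM.sqrt := hM.posSemidef_sqrt.isHermitian
  have h0 : hM.sqrt.conjTranspose * hM.sqrt = M := by rw [hherm, hs]
  have htr : (hM.sqrt.conjTranspose * hM.sqrt).trace = 0 := by rw [h0, h]
  have hzz : hM.sqrt = 0 := by
    rw [Matrix.trace] at htr
    have hnn : ∀ i, 0 ≤ (hM.sqrt.conjTranspose * hM.sqrt).diag i := by
      intro i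
      simp only [Matrix.diag, Matrix.mul_apply, Matrix.conjTranspose_apply]
      exact Finset.sum_nonneg fun j _ => star_mul_self_nonneg _
    have hall := (Finset.sum_eq_zero_iff_of_nonneg (fun i _ => hnn i)).mp htr
    apply Matrix.ext
    intro i j
    have hj := hall j (Finset.mem_univ j)
    simp only [Matrix.diag, Matrix.mul_apply, Matrix.conjTranspose_apply] at hj
    have h3 := (Finset.sum_eq_zero_iff_of_nonneg
      (fun k (_ : k ∈ Finset.univ) => star_mul_self_nonneg (hM.sqrt k j))).mp hj i
      (Finset.mem_univ i)
    simpa using (CStarRing.star_mul_self_eq_zero_iff (hM.sqrt i j)).mp h3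
  rw [← h0, hzz]; simp

/-- If X, Y are PSD and trace (X*Y) = 0 then X*Y = 0. -/
lemma psd_mul_psd_trace_zero {X Y : Matrix n n ℂ} (hX : X.PosSemidef) (hY : Y.PosSemidef)
    (h : (X * Y).trace = 0) : X * Y = 0 := by
  set C := hX.sqrt with hC
  have hCiH : C.conjTranspose = C := hX.posSemidef_sqrt.isHermitian
  have hCC : C * C = X := hX.sqrt_mul_self
  have hPSD : (C.conjTranspose * Y * C).PosSemidef := hY.conjTranspose_mul_mul_same C
  have htr : (C.conjTranspose * Y * C).trace = 0 := by
    rw [hCiH]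
    calc (C * Y * C).trace = (C * (C * Y)).trace := by
          rw [Matrix.trace_mul_comm (C * Y) C]
    _ = ((C * C) * Y).trace := by rw [Matrix.mul_assoc]
    _ = 0 := by rw [hCC, h]
  have hzero : C.conjTranspose * Y * C = 0 := psd_trace_zero hPSD htr
  set D := hY.sqrt with hD
  have hDiH : D.conjTranspose = D := hY.posSemidef_sqrt.isHermitian
  have hDD : D * D = Y := hY.sqrt_mul_self
  have h2 : (D * C).conjTranspose * (D * C) = 0 := by
    rw [Matrix.conjTranspose_mul, hDiH, hCiH]
    calc C * D * (D * C) = C * (D * D) * C := by noncomm_ring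
    _ = C.conjTranspose * Y * C := by rw [hDD, hCiH]
    _ = 0 := hzero
  have hDC : D * C = 0 := Matrix.conjTranspose_mul_self_eq_zero.mp h2
  have hYC : Y * C = 0 := by
    calc Y * C = D * (D * C) := by rw [← Matrix.mul_assoc, hDD]
    _ = 0 := by rw [hDC, Matrix.mul_zero]
  have hYX : Y * X = 0 := by
    calc Y * X = (Y * C) * C := by rw [Matrix.mul_assoc, hCC]
    _ = 0 := by rw [hYC, Matrix.zero_mul]
  calc X * Y = (Y.conjTranspose * X.conjTranspose).conjTranspose := by
        rw [← Matrix.conjTranspose_mul, Matrix.conjTranspose_conjTranspose]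
  _ = (Y * X).conjTranspose := by rw [hY.isHermitian, hX.isHermitian]
  _ = 0 := by rw [hYX, Matrix.conjTranspose_zero]

/-- Diagonal entries of a PSD matrix are nonnegative. -/
lemma psd_diag_nonneg {M : Matrix n n ℂ} (hM : M.PosSemidef) (i : n) : 0 ≤ M i i := by
  exact hM.diag_nonneg

/-- The trace of a Hermitian idempotent complex matrix is a natural number. -/
lemma herm_idem_trace_nat {M : Matrix n n ℂ} (hH : M.IsHermitian) (hI : M * M = M) :
    ∃ k : ℕ, M.trace = k := by
  set U : Matrix n n ℂ := (hH.eigenvectorUnitary : Matrix n n ℂ) with hU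
  set d : n → ℂ := RCLike.ofReal ∘ hH.eigenvalues with hd
  have hdiag : star U * M * U = Matrix.diagonal d := by
    have := hH.conjStarAlgAut_star_eigenvectorUnitary
    rw [Unitary.conjStarAlgAut_apply, Unitary.coe_star, star_star] at this
    exact this
  have hsq : Matrix.diagonal d * Matrix.diagonal d = Matrix.diagonal d := by
    rw [← hdiag]
    have hUsU : U * (star U : Matrix n n ℂ) = 1 :=
      (Matrix.mem_unitaryGroup_iff).mp hH.eigenvectorUnitary.2
    calc (star U * M * U) * (star U * M * U)
        = star U * M * (U * star U) * M * U := by noncomm_ring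
    _ = star U * (M * M) * U := by rw [hUsU, Matrix.mul_one, Matrix.mul_assoc (star U) M M]
    _ = star U * M * U := by rw [hI]
  have hev : ∀ i, hH.eigenvalues i = 0 ∨ hH.eigenvalues i = 1 := by
    intro i
    have h1 : d i * d i = d i := by
      have := congrArg (fun (X : Matrix n n ℂ) => X i i) hsq
      simpa [Matrix.diagonal_mul_diagonal] using this
    have h3 : hH.eigenvalues i * hH.eigenvalues i = hH.eigenvalues i := by
      have h1' : (RCLike.ofReal (hH.eigenvalues i * hH.eigenvalues i) : ℂ)
          = RCLike.ofReal (hH.eigenvalues i) := by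
        rw [RCLike.ofReal_mul]; exact h1
      exact RCLike.ofReal_injective h1'
    have h4 : hH.eigenvalues i * (hH.eigenvalues i - 1) = 0 := by ring_nf; linarith
    rcases mul_eq_zero.mp h4 with h | h
    · exact Or.inl h
    · exact Or.inr (by linarith [sub_eq_zero.mp h])
  have htrace : M.trace = ∑ i, d i := by
    conv_lhs => rw [hH.spectral_theorem, Unitary.conjStarAlgAut_apply]
    rw [Matrix.trace_mul_cycle]
    have hsUU : (star U : Matrix n n ℂ) * U = 1 :=
      (Matrix.mem_unitaryGroup_iff').mp hH.eigenvectorUnitary.2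
    rw [hsUU, Matrix.one_mul, Matrix.trace_diagonal]
  refine ⟨(Finset.univ.filter fun i => hH.eigenvalues i = 1).card, ?_⟩
  rw [htrace]
  have : ∀ i, d i = if hH.eigenvalues i = 1 then (1 : ℂ) else 0 := by
    intro i
    rcases hev i with h | h <;> simp [hd, h]
  rw [Finset.sum_congr rfl fun i _ => this i]
  simp [Finset.sum_boole]


lemma diag_cancel_left {d : n → ℂ} (hd : ∀ i, d i ≠ 0) {M N : Matrix n n ℂ}
    (h : Matrix.diagonal d * M = Matrix.diagonal d * N) : M = N := by
  apply Matrix.ext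
  intro i j
  have := congrFun (congrFun h i) j
  rw [Matrix.diagonal_mul, Matrix.diagonal_mul] at this
  exact mul_left_cancel₀ (hd i) this

end AuxLemmas

/-- Correctness of the SUBSET-SUM reduction for generating the correlation
`(1/2)·I₂` from a pure state with squared Schmidt coefficients `λ₁, …, λᵣ`. -/
theorem measurement_on_pure_state_generates_half_identity_iff_subset_sum
    (r : ℕ) (l : Fin r → ℝ) (hl : ∀ i, 0 < l i) (hsum : ∑ i, l i = 1)
    (Λ : Matrix (Fin r) (Fin r) ℂ)
    (hΛ : Λ = Matrix.diagonal (fun i => (Real.sqrt (l i) : ℂ))) :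
    (∃ A B : Matrix (Fin r) (Fin r) ℂ,
      A.PosSemidef ∧ (1 - A).PosSemidef ∧ B.PosSemidef ∧ (1 - B).PosSemidef ∧
      (Λ * A * Λ * B).trace = 1 / 2 ∧
      (Λ * (1 - A) * Λ * (1 - B)).trace = 1 / 2 ∧
      (Λ * A * Λ * (1 - B)).trace = 0 ∧
      (Λ * (1 - A) * Λ * B).trace = 0)
    ↔ ∃ S : Finset (Fin r), ∑ i ∈ S, l i = 1 / 2 := by
  subst hΛ
  set d : Fin r → ℂ := fun i => (Real.sqrt (l i) : ℂ) with hdd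
  set lC : Fin r → ℂ := fun i => ((l i : ℝ) : ℂ) with hlC
  constructor
  · rintro ⟨A, B, hA, hA', hB, hB', h1, h2, h3, h4⟩
    set L := Matrix.diagonal d with hL
    have hd0 : ∀ i, d i ≠ 0 := fun i => by
      simp only [hdd, ne_eq, Complex.ofReal_eq_zero]
      exact (Real.sqrt_pos.mpr (hl i)).ne'
    have hLH : L.conjTranspose = L := by
      rw [hL, Matrix.diagonal_conjTranspose]
      exact congrArg Matrix.diagonal (funext fun i => by
        simp [hdd, Pi.star_apply, Complex.conj_ofReal])
    have hLL : L * L = Matrix.diagonal lC := by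
      rw [hL, Matrix.diagonal_mul_diagonal]
      exact congrArg Matrix.diagonal (funext fun i => by
        simp [hdd, hlC, ← Complex.ofReal_mul, Real.mul_self_sqrt (hl i).le])
    -- PSD conjugations
    have hLAL : (L * A * L).PosSemidef := by
      have := hA.conjTranspose_mul_mul_same L; rwa [hLH] at this
    have hLA'L : (L * (1 - A) * L).PosSemidef := by
      have := hA'.conjTranspose_mul_mul_same L; rwa [hLH] at this
    have hLBL : (L * B * L).PosSemidef := by
      have := hB.conjTranspose_mul_mul_same L; rwa [hLH] at this
    have hLB'L : (L * (1 - B) * L).PosSemidef := by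
      have := hB'.conjTranspose_mul_mul_same L; rwa [hLH] at this
    -- trace cyclicity
    have tcyc : ∀ (X Y : Matrix (Fin r) (Fin r) ℂ),
        (L * X * L * Y).trace = (L * Y * L * X).trace := by
      intro X Y
      calc (L * X * L * Y).trace = ((L * X) * (L * Y)).trace := by rw [Matrix.mul_assoc]
      _ = ((L * Y) * (L * X)).trace := Matrix.trace_mul_comm _ _
      _ = (L * Y * L * X).trace := by simp only [Matrix.mul_assoc]
    -- zero products
    have E3 : L * A * L * (1 - B) = 0 := psd_mul_psd_trace_zero hLAL hB' h3
    have E4 : L * (1 - A) * L * B = 0 := psd_mul_psd_trace_zero hLA'L hB h4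
    have E3' : L * (1 - B) * L * A = 0 :=
      psd_mul_psd_trace_zero hLB'L hA (by rw [tcyc]; exact h3)
    have E4' : L * B * L * (1 - A) = 0 :=
      psd_mul_psd_trace_zero hLBL hA' (by rw [tcyc]; exact h4)
    -- algebraic consequences
    have R1a : L * A * L = L * A * L * B := by
      have h' := E3
      rw [Matrix.mul_sub, Matrix.mul_one] at h'
      exact sub_eq_zero.mp h'
    have R1b : L * L * B = L * A * L * B := by
      have h' : (L - L * A) * (L * B) = 0 := by
        calc (L - L * A) * (L * B) = L * (1 - A) * L * B := by noncomm_ring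
        _ = 0 := E4
      rw [sub_mul] at h'
      have h'' := sub_eq_zero.mp h'
      calc L * L * B = L * (L * B) := by rw [Matrix.mul_assoc]
      _ = L * A * (L * B) := h''
      _ = L * A * L * B := by simp only [Matrix.mul_assoc]
    have R1 : L * L * B = L * A * L := by rw [R1b, ← R1a]
    have R2a : L * B * L = L * B * L * A := by
      have h' := E4'
      rw [Matrix.mul_sub, Matrix.mul_one] at h'
      exact sub_eq_zero.mp h'
    have R2b : L * L * A = L * B * L * A := by
      have h' : (L - L * B) * (L * A) = 0 := by
        calc (L - L * B) * (L * A) = L * (1 - B) * L * A := by noncomm_ring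
        _ = 0 := E3'
      rw [sub_mul] at h'
      have h'' := sub_eq_zero.mp h'
      calc L * L * A = L * (L * A) := by rw [Matrix.mul_assoc]
      _ = L * B * (L * A) := h''
      _ = L * B * L * A := by simp only [Matrix.mul_assoc]
    have R2 : L * L * A = L * B * L := by rw [R2b, ← R2a]
    -- cancellations
    have r1 : L * B = A * L := by
      apply diag_cancel_left hd0 (M := L * B) (N := A * L)
      show Matrix.diagonal d * (L * B) = Matrix.diagonal d * (A * L)
      rw [← hL, ← Matrix.mul_assoc, ← Matrix.mul_assoc, R1]
    have r2 : L * A = B * L := by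
      apply diag_cancel_left hd0 (M := L * A) (N := B * L)
      show Matrix.diagonal d * (L * A) = Matrix.diagonal d * (B * L)
      rw [← hL, ← Matrix.mul_assoc, ← Matrix.mul_assoc, R2]
    -- L² commutes with B
    have hc2 : Matrix.diagonal lC * B = B * Matrix.diagonal lC := by
      rw [← hLL]
      calc L * L * B = L * A * L := R1
      _ = (L * A) * L := rfl
      _ = (B * L) * L := by rw [r2]
      _ = B * (L * L) := by rw [Matrix.mul_assoc]
    have hblockB : ∀ i j, l i ≠ l j → B i j = 0 := by
      intro i j hij
      have h5 := congrFun (congrFun hc2 i) j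
      rw [Matrix.diagonal_mul, Matrix.mul_diagonal] at h5
      by_contra hB0
      have h7 : lC i * B i j = lC j * B i j := by rw [h5, mul_comm]
      have h6 := mul_right_cancel₀ hB0 h7
      exact hij (by simpa [hlC] using h6)
    have hcommB : L * B = B * L := by
      apply Matrix.ext
      intro i j
      rw [hL, Matrix.diagonal_mul, Matrix.mul_diagonal]
      by_cases hij : l i = l j
      · have hdij : d i = d j := by simp [hdd, hij]
        rw [hdij, mul_comm]
      · rw [hblockB i j hij, mul_zero, zero_mul]
    have hAeqB : A = B := by
      apply diag_cancel_left hd0 (M := A) (N := B)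
      show Matrix.diagonal d * A = Matrix.diagonal d * B
      rw [← hL, r2, ← hcommB]
    subst hAeqB
    have hcomm : L * A = A * L := hcommB
    -- idempotency
    have e0 : L * (L * (A * (1 - A))) = 0 := by
      have h7 : L * (A * (L * (1 - A))) = 0 := by
        simpa only [Matrix.mul_assoc] using E3
      calc L * (L * (A * (1 - A))) = L * ((L * A) * (1 - A)) := by rw [Matrix.mul_assoc]
      _ = L * ((A * L) * (1 - A)) := by rw [hcomm]
      _ = L * (A * (L * (1 - A))) := by rw [Matrix.mul_assoc]
      _ = 0 := h7
    have e1 : A * (1 - A) = 0 := by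
      apply diag_cancel_left hd0 (M := A * (1 - A)) (N := 0)
      show Matrix.diagonal d * (A * (1 - A)) = Matrix.diagonal d * 0
      rw [Matrix.mul_zero, ← hL]
      apply diag_cancel_left hd0 (M := L * (A * (1 - A))) (N := 0)
      show Matrix.diagonal d * (L * (A * (1 - A))) = Matrix.diagonal d * 0
      rw [Matrix.mul_zero, ← hL]
      exact e0
    have hidem : A * A = A := by
      have h' := e1
      rw [Matrix.mul_sub, Matrix.mul_one] at h'
      exact (sub_eq_zero.mp h').symm
    -- trace value
    have htr : (Matrix.diagonal lC * A).trace = 1 / 2 := by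
      have e2 : L * A * L * A = Matrix.diagonal lC * A := by
        calc L * A * L * A = L * ((A * L) * A) := by simp only [Matrix.mul_assoc]
        _ = L * ((L * A) * A) := by rw [hcomm]
        _ = (L * L) * (A * A) := by simp only [Matrix.mul_assoc]
        _ = (L * L) * A := by rw [hidem]
        _ = Matrix.diagonal lC * A := by rw [hLL]
      rw [← e2]; exact h1
    -- real diagonal data
    set f : Fin r → ℝ := fun i => (A i i).re with hf
    have hf0 : ∀ i, 0 ≤ f i := by
      intro i
      have := psd_diag_nonneg hA i
      exact (Complex.nonneg_iff.mp this).1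
    have hf1 : ∀ i, f i ≤ 1 := by
      intro i
      have h5 := psd_diag_nonneg hA' i
      have h6 : (1 - A) i i = 1 - A i i := by
        simp [Matrix.sub_apply, Matrix.one_apply_eq]
      rw [h6] at h5
      have := (Complex.nonneg_iff.mp h5).1
      simp only [Complex.sub_re, Complex.one_re] at this
      linarith
    have hsum2 : ∑ i, l i * f i = 1 / 2 := by
      have h5 : ((Matrix.diagonal lC * A).trace).re = 1 / 2 := by
        rw [htr]; norm_num
      rw [Matrix.trace] at h5
      have h6 : ∀ i, (Matrix.diagonal lC * A).diag i = lC i * A i i := by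
        intro i
        simp [Matrix.diag, Matrix.diagonal_mul]
      rw [Finset.sum_congr rfl fun i _ => h6 i, Complex.re_sum] at h5
      have h7 : ∀ i, (lC i * A i i).re = l i * f i := by
        intro i
        rw [hlC]
        exact Complex.re_ofReal_mul _ _
      rw [Finset.sum_congr rfl fun i _ => h7 i] at h5
      exact h5
    -- fiberwise integrality
    have key : ∀ v ∈ Finset.univ.image l, ∃ s : Finset (Fin r),
        s ⊆ Finset.univ.filter (fun i => l i = v) ∧
        ∑ i ∈ s, l i = ∑ i ∈ Finset.univ.filter (fun i => l i = v), l i * f i := by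
      intro v _
      set P := Matrix.diagonal (fun i => if l i = v then (1 : ℂ) else 0) with hP
      have hPH : P.conjTranspose = P := by
        rw [hP, Matrix.diagonal_conjTranspose]
        exact congrArg Matrix.diagonal (funext fun i => by
          by_cases h : l i = v <;> simp [h])
      have hAP : A * P = P * A := by
        apply Matrix.ext
        intro i j
        rw [hP, Matrix.mul_diagonal, Matrix.diagonal_mul]
        by_cases hij : l i = l j
        · rw [hij]; exact mul_comm _ _
        · rw [hblockB i j hij]; simp
      have hPP : P * P = P := by
        rw [hP, Matrix.diagonal_mul_diagonal]
        exact congrArg Matrix.diagonal (funext fun i => by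
          by_cases h : l i = v <;> simp [h])
      have hMH : (A * P).IsHermitian := by
        show (A * P).conjTranspose = A * P
        rw [Matrix.conjTranspose_mul, hPH, hA.isHermitian.eq, ← hAP]
      have hMI : (A * P) * (A * P) = A * P := by
        calc (A * P) * (A * P) = A * ((P * A) * P) := by simp only [Matrix.mul_assoc]
        _ = A * ((A * P) * P) := by rw [hAP]
        _ = (A * A) * (P * P) := by simp only [Matrix.mul_assoc]
        _ = A * P := by rw [hidem, hPP]
      obtain ⟨k, hk⟩ := herm_idem_trace_nat hMH hMI
      have htrP : (A * P).trace = ∑ i ∈ Finset.univ.filter (fun i => l i = v), A i i := by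
        rw [Matrix.trace]
        have h6 : ∀ i, (A * P).diag i = if l i = v then A i i else 0 := by
          intro i
          simp only [Matrix.diag, hP, Matrix.mul_diagonal]
          by_cases h : l i = v <;> simp [h]
        rw [Finset.sum_congr rfl fun i _ => h6 i, Finset.sum_ite, Finset.sum_const_zero, add_zero]
      have hkreal : ∑ i ∈ Finset.univ.filter (fun i => l i = v), f i = (k : ℝ) := by
        have h7 := hk
        rw [htrP] at h7
        have h8 := congrArg Complex.re h7
        rw [Complex.re_sum] at h8
        simpa [hf] using h8
      have hkcard : k ≤ (Finset.univ.filter (fun i => l i = v)).card := by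
        have h9 : (k : ℝ) ≤ ((Finset.univ.filter (fun i => l i = v)).card : ℝ) := by
          rw [← hkreal]
          calc ∑ i ∈ Finset.univ.filter (fun i => l i = v), f i
              ≤ ∑ i ∈ Finset.univ.filter (fun i => l i = v), 1 :=
                Finset.sum_le_sum fun i _ => hf1 i
          _ = ((Finset.univ.filter (fun i => l i = v)).card : ℝ) := by simp
        exact_mod_cast h9
      obtain ⟨s, hs_sub, hs_card⟩ := Finset.exists_subset_card_eq hkcard
      refine ⟨s, hs_sub, ?_⟩
      have hlv : ∀ i ∈ s, l i = v := by
        intro i hi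
        have := hs_sub hi
        simpa using (Finset.mem_filter.mp this).2
      calc ∑ i ∈ s, l i = ∑ _i ∈ s, v := Finset.sum_congr rfl hlv
      _ = (s.card : ℝ) * v := by rw [Finset.sum_const, nsmul_eq_mul]
      _ = (k : ℝ) * v := by rw [hs_card]
      _ = v * ∑ i ∈ Finset.univ.filter (fun i => l i = v), f i := by
          rw [hkreal, mul_comm]
      _ = ∑ i ∈ Finset.univ.filter (fun i => l i = v), v * f i := by
          rw [Finset.mul_sum]
      _ = ∑ i ∈ Finset.univ.filter (fun i => l i = v), l i * f i := by
          refine Finset.sum_congr rfl fun i hi => ?_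
          have : l i = v := by simpa using (Finset.mem_filter.mp hi).2
          rw [this]
    choose t ht1 ht2 using key
    have hdisj : (↑(Finset.univ.image l).attach : Set {x // x ∈ Finset.univ.image l}).PairwiseDisjoint
        (fun v => t v.1 v.2) := by
      intro x _ y _ hxy
      have hv : x.1 ≠ y.1 := fun h => hxy (Subtype.ext h)
      refine Finset.disjoint_left.mpr fun i hix hiy => ?_
      have h1x := ht1 x.1 x.2 hix
      have h1y := ht1 y.1 y.2 hiy
      have e1 : l i = x.1 := by simpa using (Finset.mem_filter.mp h1x).2
      have e2 : l i = y.1 := by simpa using (Finset.mem_filter.mp h1y).2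
      exact hv (e1 ▸ e2)
    refine ⟨(Finset.univ.image l).attach.biUnion (fun v => t v.1 v.2), ?_⟩
    rw [Finset.sum_biUnion hdisj]
    calc ∑ v ∈ (Finset.univ.image l).attach, ∑ i ∈ t v.1 v.2, l i
        = ∑ v ∈ (Finset.univ.image l).attach,
            ∑ i ∈ Finset.univ.filter (fun i => l i = v.1), l i * f i :=
          Finset.sum_congr rfl fun v _ => ht2 v.1 v.2
    _ = ∑ v ∈ Finset.univ.image l, ∑ i ∈ Finset.univ.filter (fun i => l i = v), l i * f i :=
          Finset.sum_attach _ (fun v => ∑ i ∈ Finset.univ.filter (fun i => l i = v), l i * f i)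
    _ = ∑ i, l i * f i :=
          Finset.sum_fiberwise_of_maps_to (fun i _ => Finset.mem_image_of_mem l (Finset.mem_univ i)) _
    _ = 1 / 2 := hsum2
  · rintro ⟨S, hS⟩
    set e : Fin r → ℂ := fun i => if i ∈ S then 1 else 0 with he
    set e' : Fin r → ℂ := fun i => if i ∈ S then 0 else 1 with he'
    have h1e : ∀ i, (1 : ℂ) - e i = e' i := by
      intro i; by_cases hi : i ∈ S <;> simp [he, he', hi]
    have hone : (1 : Matrix (Fin r) (Fin r) ℂ) - Matrix.diagonal e = Matrix.diagonal e' := by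
      ext i j
      by_cases hij : i = j
      · subst hij
        simp [Matrix.sub_apply, Matrix.one_apply_eq, h1e i]
      · simp [Matrix.sub_apply, Matrix.diagonal_apply_ne _ hij, Matrix.one_apply_ne hij]
    refine ⟨Matrix.diagonal e, Matrix.diagonal e, ?_, ?_, ?_, ?_, ?_, ?_, ?_, ?_⟩
    · exact Matrix.PosSemidef.diagonal (fun i => by by_cases hi : i ∈ S <;> simp [he, hi])
    · rw [hone]
      exact Matrix.PosSemidef.diagonal (fun i => by by_cases hi : i ∈ S <;> simp [he', hi])
    · exact Matrix.PosSemidef.diagonal (fun i => by by_cases hi : i ∈ S <;> simp [he, hi])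
    · rw [hone]
      exact Matrix.PosSemidef.diagonal (fun i => by by_cases hi : i ∈ S <;> simp [he', hi])
    · rw [Matrix.diagonal_mul_diagonal, Matrix.diagonal_mul_diagonal,
        Matrix.diagonal_mul_diagonal, Matrix.trace_diagonal]
      have : ∀ i, d i * e i * d i * e i = if i ∈ S then ((l i : ℝ) : ℂ) else 0 := by
        intro i
        by_cases hi : i ∈ S <;>
          simp [he, hi, hdd, ← Complex.ofReal_mul,
            Real.mul_self_sqrt (hl i).le]
      rw [Finset.sum_congr rfl fun i _ => this i]
      rw [Finset.sum_ite_mem, Finset.univ_inter, ← Complex.ofReal_sum, hS]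
      norm_num
    · rw [hone, Matrix.diagonal_mul_diagonal, Matrix.diagonal_mul_diagonal,
        Matrix.diagonal_mul_diagonal, Matrix.trace_diagonal]
      have : ∀ i, d i * e' i * d i * e' i = if i ∈ S then 0 else ((l i : ℝ) : ℂ) := by
        intro i
        by_cases hi : i ∈ S <;>
          simp [he', hi, hdd, ← Complex.ofReal_mul,
            Real.mul_self_sqrt (hl i).le]
      rw [Finset.sum_congr rfl fun i _ => this i]
      have hSc : ∑ i ∈ Sᶜ, l i = 1 / 2 := by
        have := Finset.sum_add_sum_compl S l
        rw [hS, hsum] at this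
        linarith
      rw [Finset.sum_ite, Finset.sum_const_zero, zero_add]
      have : Finset.univ.filter (fun i => i ∉ S) = Sᶜ := by
        ext i; simp
      rw [this, ← Complex.ofReal_sum, hSc]
      norm_num
    · rw [hone, Matrix.diagonal_mul_diagonal, Matrix.diagonal_mul_diagonal,
        Matrix.diagonal_mul_diagonal, Matrix.trace_diagonal]
      have : ∀ i, d i * e i * d i * e' i = 0 := by
        intro i
        by_cases hi : i ∈ S <;> simp [he, he', hi]
      rw [Finset.sum_congr rfl fun i _ => this i, Finset.sum_const_zero]
    · rw [hone, Matrix.diagonal_mul_diagonal, Matrix.diagonal_mul_diagonal,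
        Matrix.diagonal_mul_diagonal, Matrix.trace_diagonal]
      have : ∀ i, d i * e' i * d i * e i = 0 := by
        intro i
        by_cases hi : i ∈ S <;> simp [he, he', hi]
      rw [Finset.sum_congr rfl fun i _ => this i, Finset.sum_const_zero]
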